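/- Let G be a weighted undirected graph partitioned into G_1, ..., G_k, and let s, t be vertices in the same partition G_i. If d_{G_i}(s,t) < min over b_1, b_2 ∈ B_i of [ d_{G_i}(s, b_1) + d_G(b_1, b_2) + d_{G_i}(b_2, t) ], then every shortest path from s to t in G stays entirely within G_i, and d_G(s,t) = d_{G_i}(s,t). -/

import Mathlib

open scoped ENNReal Classical

namespace PSP

/-- A weighted undirected graph: symmetric adjacency and a weight function
with values in `ℝ≥0∞` (so weights are non-negative). -/
structure WGraph (V : Type*) where
  Adj : V → V → Prop
  symm : ∀ {u v}, Adj u v → Adj v u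
  w : V → V → ℝ≥0∞

variable {V : Type*} {ι : Type*}

/-- Sum of `f` over consecutive pairs of a list. -/
noncomputable def pairSum (f : V → V → ℝ≥0∞) : List V → ℝ≥0∞
  | a :: b :: rest => f a b + pairSum f (b :: rest)
  | _ => 0

/-- Weighted length of a walk (given as a list of vertices). -/
noncomputable def wlen (G : WGraph V) (l : List V) : ℝ≥0∞ := pairSum G.w l

/-- `l` is a walk in `G` from `s` to `t`: consecutive vertices are adjacent,
the first vertex is `s` and the last is `t`. -/
def IsWalk (G : WGraph V) (s t : V) (l : List V) : Prop :=
  l.Chain' G.Adj ∧ l.head? = some s ∧ l.getLast? = some t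

/-- Shortest-path distance in `G` (`⊤` if no walk exists). -/
noncomputable def dist (G : WGraph V) (s t : V) : ℝ≥0∞ :=
  sInf {x | ∃ l, IsWalk G s t l ∧ wlen G l = x}

/-- Induced subgraph on a vertex set `S`. -/
def induce (G : WGraph V) (S : Set V) : WGraph V where
  Adj u v := G.Adj u v ∧ u ∈ S ∧ v ∈ S
  symm h := ⟨G.symm h.1, h.2.2, h.2.1⟩
  w := G.w

/-- A partition of the vertex set is given by a function `P : V → ι`
assigning each vertex its partition index. The set of all boundary
vertices: vertices having a neighbor in another partition. -/
def bdry (G : WGraph V) (P : V → ι) : Set V :=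
  {v | ∃ u, G.Adj v u ∧ P u ≠ P v}

/-- Boundary vertices of partition `i`. -/
def bdryIn (G : WGraph V) (P : V → ι) (i : ι) : Set V :=
  {v | P v = i ∧ ∃ u, G.Adj v u ∧ P u ≠ i}

/-- The induced subgraph `G_i` of partition `i`. -/
def partGraph (G : WGraph V) (P : V → ι) (i : ι) : WGraph V :=
  induce G {x | P x = i}

/-- The No-Boundary overlay graph `G̃`: vertices are boundary vertices; for each
partition, each boundary pair gets an edge of weight equal to the *local*
partition distance; inter-partition edges of `G` keep their original weight. -/
noncomputable def overlay (G : WGraph V) (P : V → ι) : WGraph V where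
  Adj u v := (P u = P v ∧ u ∈ bdry G P ∧ v ∈ bdry G P) ∨ (P u ≠ P v ∧ G.Adj u v)
  symm := by
    rintro u v (⟨h1, h2, h3⟩ | ⟨h1, h2⟩)
    · exact Or.inl ⟨h1.symm, h3, h2⟩
    · exact Or.inr ⟨fun h => h1 h.symm, G.symm h2⟩
  w u v := if P u = P v then dist (partGraph G P (P u)) u v else G.w u v

/-- A half-connected boundary vertex: has a non-boundary neighbor in its own partition. -/
def halfC (G : WGraph V) (P : V → ι) (b : V) : Prop :=
  b ∈ bdry G P ∧ ∃ u, G.Adj b u ∧ P u = P b ∧ u ∉ bdry G P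

/-- A full-connected boundary vertex: all in-partition neighbors are boundary vertices. -/
def fullC (G : WGraph V) (P : V → ι) (b : V) : Prop :=
  b ∈ bdry G P ∧ ∀ u, G.Adj b u → P u = P b → u ∈ bdry G P

/-- The pruned overlay graph `G̃'`, with inserted boundary-pair weights `ω`:
edges among half-connected boundary pairs of the same partition (weight `ω`),
all inter-partition edges, and the original in-partition adjacent edges of
full-connected boundary vertices. -/
noncomputable def pruned (G : WGraph V) (P : V → ι) (ω : V → V → ℝ≥0∞) : WGraph V where
  Adj u v :=
    (P u = P v ∧ halfC G P u ∧ halfC G P v) ∨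
    (P u ≠ P v ∧ G.Adj u v) ∨
    (P u = P v ∧ G.Adj u v ∧ u ∈ bdry G P ∧ v ∈ bdry G P ∧ (fullC G P u ∨ fullC G P v))
  symm := by
    rintro u v (⟨h1, h2, h3⟩ | ⟨h1, h2⟩ | ⟨h1, h2, h3, h4, h5⟩)
    · exact Or.inl ⟨h1.symm, h3, h2⟩
    · exact Or.inr (Or.inl ⟨fun h => h1 h.symm, G.symm h2⟩)
    · exact Or.inr (Or.inr ⟨h1.symm, G.symm h2, h4, h3, h5.symm⟩)
  w u v := if P u = P v ∧ halfC G P u ∧ halfC G P v then ω u v else G.w u v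

/-- The augmented partition graph `G'_i`: the induced subgraph `G_i` plus, for each
boundary pair `b₁ b₂ ∈ B_i`, an inserted edge of weight `ω b₁ b₂` (taking the
minimum with an already-existing edge weight). -/
noncomputable def augment (G : WGraph V) (P : V → ι) (i : ι) (ω : V → V → ℝ≥0∞) : WGraph V where
  Adj u v := (G.Adj u v ∧ P u = i ∧ P v = i) ∨ (u ∈ bdryIn G P i ∧ v ∈ bdryIn G P i)
  symm := by
    rintro u v (⟨h1, h2, h3⟩ | ⟨h1, h2⟩)
    · exact Or.inl ⟨G.symm h1, h3, h2⟩
    · exact Or.inr ⟨h2, h1⟩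
  w u v :=
    if u ∈ bdryIn G P i ∧ v ∈ bdryIn G P i then
      (if G.Adj u v ∧ P u = i ∧ P v = i then min (ω u v) (G.w u v) else ω u v)
    else G.w u v

/-- Graph obtained from `G` by adding, for every pair `u v ∈ S`, a shortcut edge
of weight `dist G u v` (taking the minimum with an already-existing edge weight). -/
noncomputable def shortcut (G : WGraph V) (S : Set V) : WGraph V where
  Adj u v := G.Adj u v ∨ (u ∈ S ∧ v ∈ S)
  symm := by
    rintro u v (h | ⟨h1, h2⟩)
    · exact Or.inl (G.symm h)
    · exact Or.inr ⟨h2, h1⟩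
  w u v :=
    if u ∈ S ∧ v ∈ S then
      (if G.Adj u v then min (dist G u v) (G.w u v) else dist G u v)
    else G.w u v

/-- Vertex-splitting construction: each cut vertex `x ∈ X` keeps its neighbors in
group `N x 0`; for `1 ≤ i ≤ l x` a duplicate `(x, i)` is created, connected to the
vertices of `N x i` with the original weights and to `x` by a zero-weight edge. -/
noncomputable def split (G : WGraph V) (X : Set V) (N : V → ℕ → Set V) (l : V → ℕ) :
    WGraph (V ⊕ V × ℕ) where
  Adj a b := match a, b with
    | .inl u, .inl v => G.Adj u v ∧ (u ∈ X → v ∈ N u 0) ∧ (v ∈ X → u ∈ N v 0)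
    | .inl v, .inr (x, i) => x ∈ X ∧ 1 ≤ i ∧ i ≤ l x ∧ ((G.Adj x v ∧ v ∈ N x i) ∨ v = x)
    | .inr (x, i), .inl v => x ∈ X ∧ 1 ≤ i ∧ i ≤ l x ∧ ((G.Adj x v ∧ v ∈ N x i) ∨ v = x)
    | .inr _, .inr _ => False
  symm := by
    rintro (u | ⟨x, i⟩) (v | ⟨y, j⟩) h
    · exact ⟨G.symm h.1, h.2.2, h.2.1⟩
    · exact h
    · exact h
    · exact h.elim
  w a b := match a, b with
    | .inl u, .inl v => G.w u v
    | .inl v, .inr (x, _) => if v = x then 0 else G.w x v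
    | .inr (x, _), .inl v => if v = x then 0 else G.w x v
    | .inr _, .inr _ => 0


/-! ### Auxiliary lemmas for stmt19 -/

section Aux

variable {V ι : Type*}

lemma dist_le_wlen (G : WGraph V) {s t : V} {l : List V} (h : IsWalk G s t l) :
    dist G s t ≤ wlen G l :=
  sInf_le ⟨l, h, rfl⟩

lemma isWalk_singleton (G : WGraph V) (s : V) : IsWalk G s s [s] :=
  ⟨List.isChain_singleton _, rfl, rfl⟩

lemma dist_self_le_zero (G : WGraph V) (s : V) : dist G s s ≤ 0 := by
  have := dist_le_wlen G (isWalk_singleton G s)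
  simpa [wlen, pairSum] using this

lemma dist_le_w (G : WGraph V) {u v : V} (h : G.Adj u v) : dist G u v ≤ G.w u v := by
  have hw : IsWalk G u v [u, v] := ⟨List.isChain_pair.mpr h, rfl, rfl⟩
  have := dist_le_wlen G hw
  simpa [wlen, pairSum] using this

lemma dist_triangle_edge (G : WGraph V) {u v b : V} (h : G.Adj u v) :
    dist G u b ≤ G.w u v + dist G v b := by
  have key : ∀ x ∈ {x | ∃ l, IsWalk G v b l ∧ wlen G l = x},
      dist G u b ≤ x + G.w u v := by
    intro x hx
    obtain ⟨l, hl, rfl⟩ := hx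
    cases l with
    | nil => simp [IsWalk] at hl
    | cons a rest =>
      have ha : a = v := by simpa using hl.2.1
      subst ha
      have hw : IsWalk G u b (u :: a :: rest) :=
        ⟨List.isChain_cons_cons.mpr ⟨h, hl.1⟩, rfl,
          by rw [List.getLast?_cons_cons]; exact hl.2.2⟩
      calc dist G u b ≤ wlen G (u :: a :: rest) := dist_le_wlen G hw
        _ = G.w u a + wlen G (a :: rest) := rfl
        _ = wlen G (a :: rest) + G.w u a := add_comm _ _
  calc dist G u b
      ≤ ⨅ x ∈ {x | ∃ l, IsWalk G v b l ∧ wlen G l = x}, x + G.w u v :=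
        le_iInf₂ key
    _ = dist G v b + G.w u v := ENNReal.sInf_add.symm
    _ = G.w u v + dist G v b := add_comm _ _

lemma wlen_part (G : WGraph V) (P : V → ι) (i : ι) (l : List V) :
    wlen (partGraph G P i) l = wlen G l := rfl

lemma walk_of_part_walk (G : WGraph V) (P : V → ι) (i : ι) {s t : V} {l : List V}
    (h : IsWalk (partGraph G P i) s t l) : IsWalk G s t l :=
  ⟨h.1.imp (fun _ _ hadj => hadj.1), h.2.1, h.2.2⟩

lemma dist_le_dist_part (G : WGraph V) (P : V → ι) (i : ι) (s t : V) :
    dist G s t ≤ dist (partGraph G P i) s t := by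
  refine le_sInf fun x hx => ?_
  obtain ⟨l, hl, rfl⟩ := hx
  exact sInf_le ⟨l, walk_of_part_walk G P i hl, rfl⟩

lemma chain'_part (G : WGraph V) (P : V → ι) (i : ι) :
    ∀ l : List V, l.Chain' G.Adj → (∀ v ∈ l, P v = i) →
      l.Chain' (partGraph G P i).Adj
  | [], _, _ => List.isChain_nil
  | [_], _, _ => List.isChain_singleton _
  | a :: b :: rest, h, hm => by
    simp only [List.Chain', List.isChain_cons_cons] at h ⊢
    exact ⟨⟨h.1, hm a (by simp), hm b (by simp)⟩,
      chain'_part G P i (b :: rest) h.2 fun v hv => hm v (List.mem_cons_of_mem _ hv)⟩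

lemma part_walk_of_walk (G : WGraph V) (P : V → ι) (i : ι) {s t : V} {l : List V}
    (h : IsWalk G s t l) (hm : ∀ v ∈ l, P v = i) : IsWalk (partGraph G P i) s t l :=
  ⟨chain'_part G P i l h.1 hm, h.2.1, h.2.2⟩

lemma walk_cons (G : WGraph V) {s t a b : V} {rest : List V}
    (h : IsWalk G s t (a :: b :: rest)) :
    a = s ∧ G.Adj a b ∧ IsWalk G b t (b :: rest) := by
  obtain ⟨hc, hh, hg⟩ := h
  simp only [List.Chain', List.isChain_cons_cons] at hc
  refine ⟨by simpa using hh, hc.1, hc.2, rfl, ?_⟩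
  rw [← hg, List.getLast?_cons_cons]

/-- Key lemma B: a walk ending in partition `i` that contains a vertex outside
partition `i` has length at least `dist G u b₂ + d_{G_i}(b₂, t)` for some
boundary vertex `b₂`. -/
lemma lemB (G : WGraph V) (P : V → ι) (i : ι) :
    ∀ l : List V, ∀ u t : V, IsWalk G u t l → P t = i → (∃ v ∈ l, P v ≠ i) →
      ∃ b2 ∈ bdryIn G P i, dist G u b2 + dist (partGraph G P i) b2 t ≤ wlen G l
  | [], u, t, h, _, _ => by simp [IsWalk] at h
  | [a], u, t, h, ht, hbad => by
    obtain ⟨_, hh, hg⟩ := h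
    obtain ⟨v, hv, hvne⟩ := hbad
    simp at hh hg hv
    subst hh; subst hv
    simp [ht] at hvne
    rw [hg] at hvne
    exact absurd ht hvne
  | a :: b :: rest, u, t, h, ht, hbad => by
    obtain ⟨hau, hab, hw⟩ := walk_cons G h
    subst hau
    by_cases hbb : ∃ v ∈ b :: rest, P v ≠ i
    · obtain ⟨b2, hb2, hle⟩ := lemB G P i (b :: rest) b t hw ht hbb
      refine ⟨b2, hb2, ?_⟩
      calc dist G a b2 + dist (partGraph G P i) b2 t
          ≤ (G.w a b + dist G b b2) + dist (partGraph G P i) b2 t :=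
            add_le_add_left (dist_triangle_edge G hab) _
        _ = G.w a b + (dist G b b2 + dist (partGraph G P i) b2 t) := add_assoc _ _ _
        _ ≤ G.w a b + wlen G (b :: rest) := add_le_add_right hle _
        _ = wlen G (a :: b :: rest) := rfl
    · push_neg at hbb
      have hbi : P b = i := hbb b (by simp)
      have hui : P a ≠ i := by
        obtain ⟨v, hv, hvne⟩ := hbad
        rcases List.mem_cons.mp hv with h1 | h2
        · rwa [← h1]
        · exact absurd (hbb v h2) hvne
      have hb2 : b ∈ bdryIn G P i := ⟨hbi, a, G.symm hab, hui⟩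
      refine ⟨b, hb2, ?_⟩
      have hpw : IsWalk (partGraph G P i) b t (b :: rest) :=
        part_walk_of_walk G P i hw hbb
      calc dist G a b + dist (partGraph G P i) b t
          ≤ G.w a b + wlen (partGraph G P i) (b :: rest) :=
            add_le_add (dist_le_w G hab) (dist_le_wlen _ hpw)
        _ = wlen G (a :: b :: rest) := by rw [wlen_part]; rfl

/-- Key lemma A: a walk between two vertices of partition `i` that leaves the
partition has length at least `d_{G_i}(s,b₁) + d_G(b₁,b₂) + d_{G_i}(b₂,t)`. -/
lemma lemA (G : WGraph V) (P : V → ι) (i : ι) :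
    ∀ l : List V, ∀ s t : V, IsWalk G s t l → P s = i → P t = i →
      (∃ v ∈ l, P v ≠ i) →
      ∃ b1 ∈ bdryIn G P i, ∃ b2 ∈ bdryIn G P i,
        dist (partGraph G P i) s b1 + dist G b1 b2 + dist (partGraph G P i) b2 t
          ≤ wlen G l
  | [], s, t, h, _, _, _ => by simp [IsWalk] at h
  | [a], s, t, h, hs, ht, hbad => by
    obtain ⟨_, hh, _⟩ := h
    obtain ⟨v, hv, hvne⟩ := hbad
    simp at hh hv
    subst hh; subst hv
    exact absurd hs hvne
  | a :: b :: rest, s, t, h, hs, ht, hbad => by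
    obtain ⟨has, hab, hw⟩ := walk_cons G h
    subst has
    by_cases hbi : P b = i
    · have hbb : ∃ v ∈ b :: rest, P v ≠ i := by
        obtain ⟨v, hv, hvne⟩ := hbad
        rcases List.mem_cons.mp hv with h1 | h2
        · exact absurd (h1 ▸ hs) hvne
        · exact ⟨v, h2, hvne⟩
      obtain ⟨b1, hb1, b2, hb2, hle⟩ := lemA G P i (b :: rest) b t hw hbi ht hbb
      refine ⟨b1, hb1, b2, hb2, ?_⟩
      have hadj : (partGraph G P i).Adj a b := ⟨hab, hs, hbi⟩
      calc dist (partGraph G P i) a b1 + dist G b1 b2 + dist (partGraph G P i) b2 t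
          ≤ (G.w a b + dist (partGraph G P i) b b1) + dist G b1 b2
              + dist (partGraph G P i) b2 t := by
            exact add_le_add_left (add_le_add_left
              (dist_triangle_edge (partGraph G P i) hadj) _) _
        _ = G.w a b + (dist (partGraph G P i) b b1 + dist G b1 b2
              + dist (partGraph G P i) b2 t) := by ring
        _ ≤ G.w a b + wlen G (b :: rest) := add_le_add_right hle _
        _ = wlen G (a :: b :: rest) := rfl
    · have hb1 : a ∈ bdryIn G P i := ⟨hs, b, hab, hbi⟩
      have hbadl : ∃ v ∈ a :: b :: rest, P v ≠ i := ⟨b, by simp, hbi⟩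
      obtain ⟨b2, hb2, hle⟩ := lemB G P i (a :: b :: rest) a t h ht hbadl
      refine ⟨a, hb1, b2, hb2, ?_⟩
      calc dist (partGraph G P i) a a + dist G a b2 + dist (partGraph G P i) b2 t
          ≤ 0 + dist G a b2 + dist (partGraph G P i) b2 t := by
            exact add_le_add_left (add_le_add_left (dist_self_le_zero _ _) _) _
        _ = dist G a b2 + dist (partGraph G P i) b2 t := by rw [zero_add]
        _ ≤ wlen G (a :: b :: rest) := hle

end Aux

/-- dichotomy for same-partition queries: if the local distance beats
every boundary-concatenated distance, every shortest path stays in the partition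
and the global distance equals the local one. -/
theorem stmt19 {V ι : Type*} (G : WGraph V) (P : V → ι) (i : ι) (s t : V)
    (hs : P s = i) (ht : P t = i)
    (hlt : dist (partGraph G P i) s t <
      ⨅ b1 ∈ bdryIn G P i, ⨅ b2 ∈ bdryIn G P i,
        dist (partGraph G P i) s b1 + dist G b1 b2 + dist (partGraph G P i) b2 t) :
    (∀ l : List V, IsWalk G s t l → wlen G l = dist G s t → ∀ v ∈ l, P v = i) ∧
    dist G s t = dist (partGraph G P i) s t := by
  have hkey : ∀ l, IsWalk G s t l → (∃ v ∈ l, P v ≠ i) →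
      (⨅ b1 ∈ bdryIn G P i, ⨅ b2 ∈ bdryIn G P i,
        dist (partGraph G P i) s b1 + dist G b1 b2 + dist (partGraph G P i) b2 t)
        ≤ wlen G l := by
    intro l hl hbad
    obtain ⟨b1, hb1, b2, hb2, hle⟩ := lemA G P i l s t hl hs ht hbad
    exact le_trans (le_trans (iInf₂_le b1 hb1) (iInf₂_le b2 hb2)) hle
  have hge : dist (partGraph G P i) s t ≤ dist G s t := by
    refine le_sInf fun x hx => ?_
    obtain ⟨l, hl, rfl⟩ := hx
    by_cases hall : ∀ v ∈ l, P v = i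
    · have := dist_le_wlen _ (part_walk_of_walk G P i hl hall)
      rwa [wlen_part] at this
    · push_neg at hall
      exact le_trans hlt.le (hkey l hl hall)
  have heq : dist G s t = dist (partGraph G P i) s t :=
    le_antisymm (dist_le_dist_part G P i s t) hge
  refine ⟨?_, heq⟩
  intro l hl hwl v hv
  by_contra hvne
  have h1 := hkey l hl ⟨v, hv, hvne⟩
  exact lt_irrefl _ (lt_of_lt_of_le hlt (h1.trans_eq (hwl.trans heq)))

end PSP
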